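/- arXiv:2302.08692 — 2 statements merged into one kernel-verified Lean document; each statement's English description precedes it below -/
import Mathlib

section
/- If H is symmetric positive definite and some eigenvalue λ of H satisfies α·λ(1+ρλ) > 2 + ε for ε > 0, then there exists an initial point x_0 of arbitrarily small norm such that ‖x_t‖ → ∞ under x_{t+1} = (I - α(H+ρH²))x_t; in fact ‖x_t‖ ≥ (1+ε)^t ‖x_0‖ when x_0 is the corresponding eigenvector. -/
open Matrix Filter

/-- if some eigenvalue λ of symmetric positive definite `H` satisfies
`αλ(1+ρλ) > 2 + ε`, then there are initial points of arbitrarily small norm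
(multiples of the corresponding eigenvector) for which the SAM iteration
`x_{t+1} = (I - α(H+ρH²))x_t` satisfies `‖x_t‖ ≥ (1+ε)^t‖x_0‖` and `‖x_t‖ → ∞`. -/
theorem sam_quadratic_divergence (d : ℕ) (H : Matrix (Fin d) (Fin d) ℝ)
    (hsymm : H.IsSymm) (hpos : H.PosDef) (α ρ ε : ℝ) (hα : 0 < α) (hρ : 0 < ρ)
    (hε : 0 < ε) (lam : ℝ) (v : EuclideanSpace ℝ (Fin d)) (hv : v ≠ 0)
    (hev : Matrix.toEuclideanLin H v = lam • v)
    (hunstable : α * (lam * (1 + ρ * lam)) > 2 + ε) :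
    ∀ δ > 0, ∃ x₀ : EuclideanSpace ℝ (Fin d), x₀ ≠ 0 ∧ ‖x₀‖ < δ ∧ (∃ c : ℝ, x₀ = c • v) ∧
      ∀ x : ℕ → EuclideanSpace ℝ (Fin d), x 0 = x₀ →
        (∀ t, x (t + 1) = x t - α • (Matrix.toEuclideanLin (H + ρ • (H * H))) (x t)) →
        (∀ t, (1 + ε) ^ t * ‖x 0‖ ≤ ‖x t‖) ∧
          Tendsto (fun t => ‖x t‖) atTop atTop := by
  intro δ hδ
  have hvnorm : 0 < ‖v‖ := norm_pos_iff.mpr hv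
  set c : ℝ := δ / (2 * ‖v‖) with hc
  have hcpos : 0 < c := div_pos hδ (by positivity)
  -- eigenvalue computation for H*H
  have hev2 : Matrix.toEuclideanLin (H * H) v = (lam * lam) • v := by
    have h1 : Matrix.toEuclideanLin (H * H) v
        = Matrix.toEuclideanLin H (Matrix.toEuclideanLin H v) := by
      simp [Matrix.toEuclideanLin_apply, Matrix.mulVec_mulVec]
    rw [h1, hev, _root_.map_smul, hev, smul_smul]
  set μ : ℝ := 1 - α * (lam + ρ * (lam * lam)) with hμ
  have hL : ∀ a : ℝ, (a • v) - α • (Matrix.toEuclideanLin (H + ρ • (H * H))) (a • v)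
      = (μ * a) • v := by
    intro a
    have : (Matrix.toEuclideanLin (H + ρ • (H * H))) v = (lam + ρ * (lam * lam)) • v := by
      rw [map_add, _root_.map_smul]
      rw [LinearMap.add_apply, hev]
      simp only [LinearMap.smul_apply, hev2]
      rw [smul_smul, ← add_smul]
    rw [_root_.map_smul, this]
    rw [smul_smul, smul_smul, ← sub_smul]
    congr 1; rw [hμ]; ring
  have hμneg : μ ≤ -(1 + ε) := by
    have : α * (lam + ρ * (lam * lam)) > 2 + ε := by nlinarith
    simp only [hμ]; linarith
  have habs : 1 + ε ≤ |μ| := by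
    rw [abs_of_nonpos (by linarith)]; linarith
  refine ⟨c • v, ?_, ?_, ⟨c, rfl⟩, ?_⟩
  · exact smul_ne_zero (ne_of_gt hcpos) hv
  · rw [norm_smul, Real.norm_eq_abs, abs_of_pos hcpos, hc]
    rw [div_mul_eq_mul_div, mul_comm 2 ‖v‖, ← div_div]
    rw [mul_div_assoc, div_self (ne_of_gt hvnorm), mul_one]
    linarith
  · intro x hx0 hxrec
    have hform : ∀ t, x t = (μ ^ t * c) • v := by
      intro t
      induction t with
      | zero => simpa using hx0
      | succ n ih =>
        rw [hxrec n, ih, hL, pow_succ]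
        ring_nf
    have hnorm : ∀ t, ‖x t‖ = |μ| ^ t * (c * ‖v‖) := by
      intro t
      rw [hform t, norm_smul, Real.norm_eq_abs, abs_mul, abs_pow,
        abs_of_pos hcpos, mul_assoc]
    have hx0norm : ‖x 0‖ = c * ‖v‖ := by simpa using hnorm 0
    constructor
    · intro t
      rw [hnorm t, hx0norm]
      have := pow_le_pow_left₀ (by positivity) habs t
      nlinarith [mul_pos hcpos hvnorm]
    · have h1 : Tendsto (fun t : ℕ => (1 + ε) ^ t * (c * ‖v‖)) atTop atTop := by
        apply Tendsto.atTop_mul_const (mul_pos hcpos hvnorm)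
        exact tendsto_pow_atTop_atTop_of_one_lt (by linarith)
      apply tendsto_atTop_mono _ h1
      intro t
      rw [hnorm t]
      have := pow_le_pow_left₀ (by positivity) habs t
      nlinarith [mul_pos hcpos hvnorm]
end

section
/- Let M be a real symmetric D×D matrix with an eigenvalue μ satisfying |μ| ≥ 1 + ε (ε > 0), eigenvector v with ‖v‖=1, and let e: ℝ^D → ℝ^D satisfy ‖e(z)‖ ≤ c‖z‖². Then there exists d > 0 such that for any 0 < δ < d, the iteration z_{t+1} = M z_t + e(z_t) started at z_0 = δv satisfies: either some z_t has ‖z_t‖ ≥ d, or |v·z_t| ≥ (1 + ε/2)^t δ for all t; consequently the trajectory leaves the ball of radius d in finite time. -/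
open Module

section helpers

variable {D : ℕ}

private theorem eucl_norm_le_of_abs_le {w w' : EuclideanSpace ℝ (Fin D)}
    (h : ∀ i, |w i| ≤ |w' i|) : ‖w‖ ≤ ‖w'‖ := by
  rw [EuclideanSpace.norm_eq, EuclideanSpace.norm_eq]
  apply Real.sqrt_le_sqrt
  apply Finset.sum_le_sum
  intro i _
  rw [Real.norm_eq_abs, Real.norm_eq_abs]
  exact pow_le_pow_left₀ (abs_nonneg _) (h i) 2

private noncomputable def eProj (p : Fin D → Prop) [DecidablePred p]
    (w : EuclideanSpace ℝ (Fin D)) : EuclideanSpace ℝ (Fin D) :=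
  WithLp.toLp 2 (fun i => if p i then w i else 0)

private theorem eProj_apply (p : Fin D → Prop) [DecidablePred p]
    (w : EuclideanSpace ℝ (Fin D)) (i : Fin D) :
    eProj p w i = if p i then w i else 0 := rfl

private theorem eProj_add (p : Fin D → Prop) [DecidablePred p]
    (a b : EuclideanSpace ℝ (Fin D)) :
    eProj p (a + b) = eProj p a + eProj p b := by
  ext i
  simp only [PiLp.add_apply, eProj_apply]
  split_ifs <;> simp

private theorem eProj_norm_le (p : Fin D → Prop) [DecidablePred p]
    (w : EuclideanSpace ℝ (Fin D)) : ‖eProj p w‖ ≤ ‖w‖ := by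
  apply eucl_norm_le_of_abs_le
  intro i
  rw [eProj_apply]
  split_ifs
  · exact le_rfl
  · simpa using abs_nonneg _

private theorem eProj_compl_add (p : Fin D → Prop) [DecidablePred p]
    (w : EuclideanSpace ℝ (Fin D)) :
    eProj p w + eProj (fun i => ¬ p i) w = w := by
  ext i
  simp only [PiLp.add_apply, eProj_apply]
  split_ifs <;> simp_all

end helpers

set_option maxHeartbeats 2000000 in
/-- perturbed linear instability. If symmetric `M` has an eigenvalue
`μ` with `|μ| ≥ 1 + ε` and unit eigenvector `v`, and `‖e(z)‖ ≤ c‖z‖²`, then there is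
`d > 0` such that for any `0 < δ < d`, the trajectory of `z_{t+1} = Mz_t + e(z_t)`
started at `z_0 = δv` either reaches norm `≥ d`, or has `|v·z_t| ≥ (1+ε/2)^t δ` for
all `t`; consequently it leaves the ball of radius `d` in finite time. -/
theorem perturbed_linear_instability (D : ℕ) (ε c : ℝ) (hε : 0 < ε)
    (M : EuclideanSpace ℝ (Fin D) →L[ℝ] EuclideanSpace ℝ (Fin D))
    (hMsa : IsSelfAdjoint M) (μ : ℝ) (hμ : 1 + ε ≤ |μ|)
    (v : EuclideanSpace ℝ (Fin D)) (hv : ‖v‖ = 1) (hMv : M v = μ • v)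
    (e : EuclideanSpace ℝ (Fin D) → EuclideanSpace ℝ (Fin D))
    (he : ∀ z, ‖e z‖ ≤ c * ‖z‖ ^ 2) :
    ∃ d > 0, ∀ δ : ℝ, 0 < δ → δ < d →
      ∀ z : ℕ → EuclideanSpace ℝ (Fin D), z 0 = δ • v →
        (∀ t, z (t + 1) = M (z t) + e (z t)) →
        ((∃ t, d ≤ ‖z t‖) ∨ ∀ t, (1 + ε / 2) ^ t * δ ≤ |(inner ℝ v (z t) : ℝ)|) ∧
          ∃ t, d ≤ ‖z t‖ := by
  obtain ⟨c₀, hc₀, hcc₀⟩ : ∃ c₀, 0 ≤ c₀ ∧ c ≤ c₀ := ⟨max c 0, le_max_right _ _, le_max_left _ _⟩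
  have he₀ : ∀ w, ‖e w‖ ≤ c₀ * ‖w‖ ^ 2 := fun w =>
    (he w).trans (mul_le_mul_of_nonneg_right hcc₀ (sq_nonneg _))
  have hsym : (M : EuclideanSpace ℝ (Fin D) →ₗ[ℝ] EuclideanSpace ℝ (Fin D)).IsSymmetric :=
    hMsa.isSymmetric
  have hD : finrank ℝ (EuclideanSpace ℝ (Fin D)) = D := finrank_euclideanSpace_fin
  set b := hsym.eigenvectorBasis hD with hbdef
  set lam := hsym.eigenvalues hD with hlamdef
  have hb : ∀ i, M (b i) = lam i • b i := fun i => hsym.apply_eigenvectorBasis hD i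
  clear_value b lam
  -- bound on the "small" eigenvalues
  obtain ⟨θ, hθ0, hθlt, hθ⟩ :
      ∃ θ, 0 ≤ θ ∧ θ < 1 + ε ∧ ∀ i, ¬(1 + ε ≤ |lam i|) → |lam i| ≤ θ := by
    classical
    by_cases hall : ∀ i, 1 + ε ≤ |lam i|
    · exact ⟨0, le_rfl, by linarith, fun i hi => absurd (hall i) hi⟩
    · obtain ⟨i₀, hi₀⟩ := not_forall.mp hall
      set s : Finset (Fin D) := Finset.univ.filter (fun i => ¬(1 + ε ≤ |lam i|)) with hs
      have hmem : ∀ i, ¬(1 + ε ≤ |lam i|) → i ∈ s := by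
        intro i hi
        rw [hs, Finset.mem_filter]
        exact ⟨Finset.mem_univ i, hi⟩
      have hne : s.Nonempty := ⟨i₀, hmem i₀ hi₀⟩
      refine ⟨s.sup' hne (fun i => |lam i|), ?_, ?_, ?_⟩
      · exact (abs_nonneg (lam i₀)).trans (Finset.le_sup' (fun i => |lam i|) (hmem i₀ hi₀))
      · rw [Finset.sup'_lt_iff hne]
        intro i hi
        rw [hs, Finset.mem_filter] at hi
        exact not_le.mp hi.2
      · exact fun i hi => Finset.le_sup' (fun i => |lam i|) (hmem i hi)
  have h4 : (0:ℝ) < 4 * c₀ + 1 := by linarith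
  obtain ⟨d, hd0, hcd1, hcd2⟩ :
      ∃ d, 0 < d ∧ 4 * (c₀ * d) ≤ ε ∧ 4 * (c₀ * d) ≤ 1 + ε - θ := by
    refine ⟨min (ε / (4 * c₀ + 1)) ((1 + ε - θ) / (4 * c₀ + 1)),
      lt_min (div_pos hε h4) (div_pos (by linarith) h4), ?_, ?_⟩
    · have h1 := (le_div_iff₀ h4).mp
        (min_le_left (ε / (4 * c₀ + 1)) ((1 + ε - θ) / (4 * c₀ + 1)))
      have h2 : 0 ≤ min (ε / (4 * c₀ + 1)) ((1 + ε - θ) / (4 * c₀ + 1)) :=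
        le_min (div_nonneg hε.le h4.le) (div_nonneg (by linarith) h4.le)
      nlinarith [mul_nonneg hc₀ h2]
    · have h1 := (le_div_iff₀ h4).mp
        (min_le_right (ε / (4 * c₀ + 1)) ((1 + ε - θ) / (4 * c₀ + 1)))
      have h2 : 0 ≤ min (ε / (4 * c₀ + 1)) ((1 + ε - θ) / (4 * c₀ + 1)) :=
        le_min (div_nonneg hε.le h4.le) (div_nonneg (by linarith) h4.le)
      nlinarith [mul_nonneg hc₀ h2]
  refine ⟨d, hd0, ?_⟩
  intro δ hδ0 hδd z hz0 hzrec
  by_cases hA : ∃ t, d ≤ ‖z t‖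
  · exact ⟨Or.inl hA, hA⟩
  push_neg at hA
  exfalso
  set x : ℕ → EuclideanSpace ℝ (Fin D) := fun t => b.repr (z t) with hxdef
  set P : EuclideanSpace ℝ (Fin D) → EuclideanSpace ℝ (Fin D) :=
    eProj (fun i => 1 + ε ≤ |lam i|) with hPdef
  set Q : EuclideanSpace ℝ (Fin D) → EuclideanSpace ℝ (Fin D) :=
    eProj (fun i => ¬(1 + ε ≤ |lam i|)) with hQdef
  clear_value x P Q
  have hPQ : ∀ w, P w + Q w = w := by
    rw [hPdef, hQdef]; exact fun w => eProj_compl_add _ w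
  have hxnorm : ∀ t, ‖x t‖ = ‖z t‖ := fun t => by rw [hxdef]; exact b.repr.norm_map (z t)
  have hxus : ∀ t, ‖z t‖ ≤ ‖P (x t)‖ + ‖Q (x t)‖ := by
    intro t
    calc ‖z t‖ = ‖P (x t) + Q (x t)‖ := by rw [hPQ, hxnorm]
    _ ≤ ‖P (x t)‖ + ‖Q (x t)‖ := norm_add_le _ _
  have hMcoef : ∀ (w : EuclideanSpace ℝ (Fin D)) i, b.repr (M w) i = lam i * b.repr w i := by
    intro w i
    rw [b.repr_apply_apply, b.repr_apply_apply]
    have h1 : (inner ℝ (M (b i)) w : ℝ) = inner ℝ (b i) (M w) := hsym (b i) w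
    rw [← h1, hb i, real_inner_smul_left]
  have hxrec : ∀ t, x (t + 1) = b.repr (M (z t)) + b.repr (e (z t)) := by
    intro t
    simp only [hxdef, hzrec t, map_add]
  -- key induction
  have key : ∀ t, ‖Q (x t)‖ ≤ ‖P (x t)‖ ∧ (1 + ε / 2) ^ t * δ ≤ ‖P (x t)‖ := by
    intro t
    induction t with
    | zero =>
      have hv0 : ∀ i, ¬(1 + ε ≤ |lam i|) → b.repr v i = 0 := by
        intro i hi
        have h1 : lam i * b.repr v i = μ * b.repr v i := by
          have h2 := hMcoef v i
          rw [hMv, map_smul] at h2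
          simpa [PiLp.smul_apply, smul_eq_mul] using h2.symm
        by_contra hr
        have hlm : lam i = μ := mul_right_cancel₀ hr h1
        rw [hlm] at hi
        exact hi hμ
      have hx0 : x 0 = δ • b.repr v := by
        simp only [hxdef, hz0, map_smul]
      have hQ0 : Q (x 0) = 0 := by
        ext i
        simp only [hQdef, eProj_apply, PiLp.zero_apply]
        split_ifs with h
        · rfl
        · have hx0i : (x 0) i = δ * b.repr v i := by rw [hx0]; rfl
          rw [hx0i, hv0 i h, mul_zero]
      have hP0 : P (x 0) = x 0 := by
        have h := hPQ (x 0)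
        rwa [hQ0, add_zero] at h
      have hux : ‖P (x 0)‖ = δ := by
        rw [hP0, hx0, norm_smul, b.repr.norm_map, hv, Real.norm_eq_abs,
          abs_of_pos hδ0, mul_one]
      constructor
      · rw [hQ0, hux]
        simpa using hδ0.le
      · rw [hux, pow_zero, one_mul]
    | succ t ih =>
      obtain ⟨hs, hu⟩ := ih
      have hu0 : 0 < ‖P (x t)‖ := lt_of_lt_of_le (by positivity) hu
      -- bound on the perturbation
      have hf : ‖b.repr (e (z t))‖ ≤ 2 * (c₀ * d) * ‖P (x t)‖ := by
        rw [b.repr.norm_map]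
        have hz1 : ‖z t‖ ^ 2 ≤ d * (‖P (x t)‖ + ‖Q (x t)‖) := by
          nlinarith [mul_le_mul_of_nonneg_right (hA t).le (norm_nonneg (z t)),
            mul_le_mul_of_nonneg_left (hxus t) hd0.le]
        calc ‖e (z t)‖ ≤ c₀ * ‖z t‖ ^ 2 := he₀ _
        _ ≤ c₀ * (d * (‖P (x t)‖ + ‖Q (x t)‖)) := mul_le_mul_of_nonneg_left hz1 hc₀
        _ ≤ 2 * (c₀ * d) * ‖P (x t)‖ := by
            nlinarith [mul_le_mul_of_nonneg_left hs (mul_nonneg hc₀ hd0.le)]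
      have hPy : (1 + ε) * ‖P (x t)‖ ≤ ‖P (b.repr (M (z t)))‖ := by
        have h1 : ‖(1 + ε) • P (x t)‖ ≤ ‖P (b.repr (M (z t)))‖ := by
          apply eucl_norm_le_of_abs_le
          intro i
          simp only [hxdef]
          rw [PiLp.smul_apply, smul_eq_mul, hPdef, eProj_apply, eProj_apply, hMcoef]
          split_ifs with h
          · rw [abs_mul, abs_mul]
            have h5 : |1 + ε| ≤ |lam i| := by
              rw [abs_of_pos (by linarith : (0:ℝ) < 1 + ε)]; exact h
            exact mul_le_mul_of_nonneg_right h5 (abs_nonneg _)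
          · simp
        rwa [norm_smul, Real.norm_eq_abs, abs_of_pos (by linarith : (0:ℝ) < 1 + ε)] at h1
      have hQy : ‖Q (b.repr (M (z t)))‖ ≤ θ * ‖Q (x t)‖ := by
        have h1 : ‖Q (b.repr (M (z t)))‖ ≤ ‖θ • Q (x t)‖ := by
          apply eucl_norm_le_of_abs_le
          intro i
          simp only [hxdef]
          rw [PiLp.smul_apply, smul_eq_mul, hQdef, eProj_apply, eProj_apply, hMcoef]
          split_ifs with h
          · simp
          · rw [abs_mul, abs_mul]
            have h5 : |lam i| ≤ |θ| := by
              rw [abs_of_nonneg hθ0]; exact hθ i h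
            exact mul_le_mul_of_nonneg_right h5 (abs_nonneg _)
        rwa [norm_smul, Real.norm_eq_abs, abs_of_nonneg hθ0] at h1
      have hurec : (1 + ε) * ‖P (x t)‖ - 2 * (c₀ * d) * ‖P (x t)‖ ≤ ‖P (x (t + 1))‖ := by
        rw [hxrec t, hPdef, eProj_add, ← hPdef]
        have h1 : ‖P (b.repr (M (z t)))‖ ≤
            ‖P (b.repr (M (z t))) + P (b.repr (e (z t)))‖ + ‖P (b.repr (e (z t)))‖ := by
          have h2 := norm_add_le (P (b.repr (M (z t))) + P (b.repr (e (z t))))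
            (-(P (b.repr (e (z t)))))
          simpa using h2
        have h2 : ‖P (b.repr (e (z t)))‖ ≤ 2 * (c₀ * d) * ‖P (x t)‖ := by
          have h6 := eProj_norm_le (fun i => 1 + ε ≤ |lam i|) (b.repr (e (z t)))
          rw [← hPdef] at h6
          exact h6.trans hf
        linarith
      have hsrec : ‖Q (x (t + 1))‖ ≤ θ * ‖Q (x t)‖ + 2 * (c₀ * d) * ‖P (x t)‖ := by
        rw [hxrec t, hQdef, eProj_add, ← hQdef]
        have h2 : ‖Q (b.repr (e (z t)))‖ ≤ 2 * (c₀ * d) * ‖P (x t)‖ := by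
          have h6 := eProj_norm_le (fun i => ¬(1 + ε ≤ |lam i|)) (b.repr (e (z t)))
          rw [← hQdef] at h6
          exact h6.trans hf
        calc ‖Q (b.repr (M (z t))) + Q (b.repr (e (z t)))‖
            ≤ ‖Q (b.repr (M (z t)))‖ + ‖Q (b.repr (e (z t)))‖ := norm_add_le _ _
        _ ≤ θ * ‖Q (x t)‖ + 2 * (c₀ * d) * ‖P (x t)‖ := by linarith
      constructor
      · nlinarith [mul_le_mul_of_nonneg_left hs hθ0, hu0.le]
      · have h3 : (1 + ε / 2) ^ (t + 1) * δ = (1 + ε / 2) * ((1 + ε / 2) ^ t * δ) := by ring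
        rw [h3]
        have h4' : (1 + ε / 2) * ((1 + ε / 2) ^ t * δ) ≤ (1 + ε / 2) * ‖P (x t)‖ :=
          mul_le_mul_of_nonneg_left hu (by linarith)
        nlinarith [hu0.le]
  -- contradiction with boundedness
  obtain ⟨n, hn⟩ := pow_unbounded_of_one_lt (d / δ) (by linarith : (1:ℝ) < 1 + ε / 2)
  have h1 : (1 + ε / 2) ^ n * δ ≤ ‖P (x n)‖ := (key n).2
  have h2 : ‖P (x n)‖ ≤ ‖z n‖ := by
    rw [← hxnorm n, hPdef]; exact eProj_norm_le _ _
  have h3 : d < (1 + ε / 2) ^ n * δ := by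
    rw [div_lt_iff₀ hδ0] at hn
    linarith
  have h5 := hA n
  linarith
end
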